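/- Suppose C is a decomposable code on n neurons, with embedded code C|_φ and ambient code C|_{[n] ∖ φ}. If the embedded code C|_φ is convex and the ambient code C|_{[n] ∖ φ} is top-dimensionally convex, then C is convex. (The hypothesis of top-dimensional convexity is placed on the ambient code, as required by the construction: a scaled convex realization of the embedded code is placed inside a full-dimensional atom of a top-dimensional convex realization of the ambient code.) -/

import Mathlib

namespace NeuralCode

/-- `USet U σ` is `U_σ = ⋂ i ∈ σ, U i` (the whole space when `σ = ∅`). -/
def USet {ι : Type*} {d : ℕ} (U : ι → Set (EuclideanSpace ℝ (Fin d))) (σ : Finset ι) :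
    Set (EuclideanSpace ℝ (Fin d)) :=
  ⋂ i ∈ σ, U i

/-- The atom of the codeword `c` in the family `U`. -/
def codeAtom {ι : Type*} {d : ℕ} (U : ι → Set (EuclideanSpace ℝ (Fin d))) (c : Finset ι) :
    Set (EuclideanSpace ℝ (Fin d)) :=
  USet U c \ ⋃ j ∉ c, U j

/-- The family `U` (of open sets) is a realization of the code `C`. -/
def IsRealization {ι : Type*} {d : ℕ} (C : Set (Finset ι))
    (U : ι → Set (EuclideanSpace ℝ (Fin d))) : Prop :=
  (∀ i, IsOpen (U i)) ∧ ∀ c : Finset ι, c ∈ C ↔ (codeAtom U c).Nonempty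

/-- The code `C` is convex: for some dimension `d` it admits a realization in `ℝ^d`
by convex open sets. -/
def IsConvexCode {ι : Type*} (C : Set (Finset ι)) : Prop :=
  ∃ (d : ℕ) (U : ι → Set (EuclideanSpace ℝ (Fin d))),
    IsRealization C U ∧ ∀ i, Convex ℝ (U i)

/-- The trunk of `σ` in `C`: the set of codewords containing `σ`. -/
def trunk {ι : Type*} (C : Set (Finset ι)) (σ : Finset ι) : Set (Finset ι) :=
  {c | c ∈ C ∧ σ ⊆ c}

/-- The neural complex `Δ(C)` of `C`. -/
def neuralComplex {ι : Type*} (C : Set (Finset ι)) : Set (Finset ι) :=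
  {σ | ∃ c ∈ C, σ ⊆ c}

/-- Condition W(i). -/
def WheelWi {ι : Type*} {d : ℕ} (U : ι → Set (EuclideanSpace ℝ (Fin d)))
    (σ1 σ2 σ3 : Finset ι) : Prop :=
  USet U σ1 ∩ USet U σ2 = USet U σ1 ∩ USet U σ2 ∩ USet U σ3 ∧
    USet U σ1 ∩ USet U σ3 = USet U σ1 ∩ USet U σ2 ∩ USet U σ3 ∧
    USet U σ2 ∩ USet U σ3 = USet U σ1 ∩ USet U σ2 ∩ USet U σ3 ∧
    (USet U σ1 ∩ USet U σ2 ∩ USet U σ3).Nonempty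

/-- Condition W(ii). -/
def WheelWii {ι : Type*} {d : ℕ} (U : ι → Set (EuclideanSpace ℝ (Fin d)))
    (σ1 σ2 σ3 τ : Finset ι) : Prop :=
  USet U σ1 ∩ USet U σ2 ∩ USet U σ3 ∩ USet U τ = ∅

/-- Condition W(iii). -/
def WheelWiii {ι : Type*} {d : ℕ} (U : ι → Set (EuclideanSpace ℝ (Fin d)))
    (σ1 σ2 σ3 τ : Finset ι) : Prop :=
  (Convex ℝ (USet U τ) ∧ Convex ℝ (USet U σ1 ∩ USet U τ) ∧
      Convex ℝ (USet U σ2 ∩ USet U τ) ∧ Convex ℝ (USet U σ3 ∩ USet U τ)) →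
    ∃ x ∈ USet U σ1 ∩ USet U τ, ∃ y ∈ USet U σ3 ∩ USet U τ,
      (segment ℝ x y ∩ (USet U σ2 ∩ USet U τ)).Nonempty

/-- Condition W(iii)◦. -/
def WheelWiiiCirc {ι : Type*} {d : ℕ} (U : ι → Set (EuclideanSpace ℝ (Fin d)))
    (σ1 σ2 σ3 τ : Finset ι) : Prop :=
  (USet U σ1 ∩ USet U τ).Nonempty ∧ (USet U σ2 ∩ USet U τ).Nonempty ∧
    (USet U σ3 ∩ USet U τ).Nonempty

/-- `(σ1, σ2, σ3, τ)` is a wheel of the realization `U`. -/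
def IsWheelOfRealization {ι : Type*} {d : ℕ} (U : ι → Set (EuclideanSpace ℝ (Fin d)))
    (σ1 σ2 σ3 τ : Finset ι) : Prop :=
  WheelWi U σ1 σ2 σ3 ∧ WheelWii U σ1 σ2 σ3 τ ∧ WheelWiii U σ1 σ2 σ3 τ

/-- Condition P(i). -/
def CondPi {ι : Type*} [DecidableEq ι] (C : Set (Finset ι)) (σ1 σ2 σ3 : Finset ι) : Prop :=
  σ1 ∪ σ2 ∪ σ3 ∈ neuralComplex C ∧
    trunk C (σ1 ∪ σ2) = trunk C (σ1 ∪ σ2 ∪ σ3) ∧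
    trunk C (σ1 ∪ σ3) = trunk C (σ1 ∪ σ2 ∪ σ3) ∧
    trunk C (σ2 ∪ σ3) = trunk C (σ1 ∪ σ2 ∪ σ3)

/-- Condition P(ii). -/
def CondPii {ι : Type*} [DecidableEq ι] (C : Set (Finset ι)) (σ1 σ2 σ3 τ : Finset ι) : Prop :=
  σ1 ∪ σ2 ∪ σ3 ∪ τ ∉ neuralComplex C

/-- Condition P(iii)◦. -/
def CondPiiiCirc {ι : Type*} [DecidableEq ι] (C : Set (Finset ι)) (σ1 σ2 σ3 τ : Finset ι) :
    Prop :=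
  σ1 ∪ τ ∈ neuralComplex C ∧ σ2 ∪ τ ∈ neuralComplex C ∧ σ3 ∪ τ ∈ neuralComplex C

/-- `(σ1, σ2, σ3, τ)` is a sprocket of `C`. -/
def IsSprocket {ι : Type*} [DecidableEq ι] (C : Set (Finset ι)) (σ1 σ2 σ3 τ : Finset ι) :
    Prop :=
  σ1 ∈ neuralComplex C ∧ σ2 ∈ neuralComplex C ∧ σ3 ∈ neuralComplex C ∧
    τ ∈ neuralComplex C ∧
    CondPi C σ1 σ2 σ3 ∧ CondPii C σ1 σ2 σ3 τ ∧ CondPiiiCirc C σ1 σ2 σ3 τ ∧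
    ∃ ρ1 ∈ neuralComplex C, ∃ ρ3 ∈ neuralComplex C,
      trunk C (σ1 ∪ τ) ⊆ trunk C ρ1 ∧ trunk C (σ3 ∪ τ) ⊆ trunk C ρ3 ∧
      trunk C τ ⊆ trunk C ρ1 ∪ trunk C ρ3 ∧
      trunk C (ρ1 ∪ ρ3 ∪ τ) ⊆ trunk C σ2

/-- `F` is a facet of `Δ(C)`: an inclusion-maximal codeword of `C`. -/
def IsFacet {ι : Type*} (C : Set (Finset ι)) (F : Finset ι) : Prop :=
  F ∈ C ∧ ∀ c ∈ C, F ⊆ c → c = F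

/-- `τ` is a max-intersection face of `Δ(C)`: a face equal to the intersection of two or
more distinct facets. -/
def IsMaxIntersectionFace {ι : Type*} [DecidableEq ι] [Fintype ι] (C : Set (Finset ι))
    (τ : Finset ι) : Prop :=
  τ ∈ neuralComplex C ∧
    ∃ S : Finset (Finset ι), 2 ≤ S.card ∧ (∀ F ∈ S, IsFacet C F) ∧ τ = S.inf id

/-- The link graph of `τ` in `Δ(C)`. -/
def linkGraph {ι : Type*} [DecidableEq ι] (C : Set (Finset ι)) (τ : Finset ι) :
    SimpleGraph {i : ι // i ∉ τ ∧ insert i τ ∈ neuralComplex C} where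
  Adj a b := a ≠ b ∧ τ ∪ {(a : ι), (b : ι)} ∈ neuralComplex C
  symm := ⟨fun a b h => ⟨h.1.symm, by rw [Finset.pair_comm]; exact h.2⟩⟩
  loopless := ⟨fun a h => h.1 rfl⟩

/-- `(σ1, σ2, σ3, τ)` is a wire wheel of `C`. -/
def IsWireWheel {ι : Type*} [DecidableEq ι] (C : Set (Finset ι)) (σ1 σ2 σ3 τ : Finset ι) :
    Prop :=
  σ1 ∈ neuralComplex C ∧ σ2 ∈ neuralComplex C ∧ σ3 ∈ neuralComplex C ∧
    τ ∈ neuralComplex C ∧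
    CondPi C σ1 σ2 σ3 ∧ CondPii C σ1 σ2 σ3 τ ∧ τ ∉ C ∧
    (∀ ω : Finset ι, ω.card = 3 → Disjoint ω τ → τ ∪ ω ∉ neuralComplex C) ∧
    (linkGraph C τ).IsTree ∧
    ∃ v1 v2 v3 : {i : ι // i ∉ τ ∧ insert i τ ∈ neuralComplex C},
      σ1 \ τ = {(v1 : ι)} ∧ σ2 \ τ = {(v2 : ι)} ∧ σ3 \ τ = {(v3 : ι)} ∧
      ∀ p : (linkGraph C τ).Walk v1 v3, p.IsPath → v2 ∈ p.support

/-- `(σ1, σ3, τ)` is a wheel frame of `C`. -/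
def IsWheelFrame {ι : Type*} [DecidableEq ι] (C : Set (Finset ι)) (σ1 σ3 τ : Finset ι) :
    Prop :=
  σ1 ∈ neuralComplex C ∧ σ3 ∈ neuralComplex C ∧ τ ∈ neuralComplex C ∧
    (σ1 ∪ σ3 ∈ neuralComplex C ∧
      ∀ ω : Finset ι, ω ⊆ σ1 ∪ σ3 → ¬ω ⊆ σ1 → ¬ω ⊆ σ3 → ω ∪ τ ∈ neuralComplex C →
        trunk C (σ1 ∪ ω) = trunk C (σ1 ∪ σ3) ∧ trunk C (σ3 ∪ ω) = trunk C (σ1 ∪ σ3)) ∧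
    τ ∪ σ1 ∪ σ3 ∉ neuralComplex C ∧
    σ1 ∪ τ ∈ neuralComplex C ∧ σ3 ∪ τ ∈ neuralComplex C ∧
    σ1 ∩ σ3 = ∅ ∧
    trunk C τ ⊆ ⋃ i ∈ (σ1 ∪ σ3 : Finset ι), trunk C {i}

/-- A subset of `ℝ^d` is top-dimensional: every nonempty intersection with an open set
has nonempty interior. -/
def TopDimensional {d : ℕ} (S : Set (EuclideanSpace ℝ (Fin d))) : Prop :=
  ∀ O : Set (EuclideanSpace ℝ (Fin d)), IsOpen O → (S ∩ O).Nonempty →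
    (interior (S ∩ O)).Nonempty

/-- A realization is top-dimensional if each of its atoms is empty or top-dimensional. -/
def IsTopDimRealization {ι : Type*} {d : ℕ} (U : ι → Set (EuclideanSpace ℝ (Fin d))) :
    Prop :=
  ∀ c : Finset ι, codeAtom U c = ∅ ∨ TopDimensional (codeAtom U c)

/-- `C` is top-dimensionally convex. -/
def IsTopDimConvexCode {ι : Type*} (C : Set (Finset ι)) : Prop :=
  ∃ (d : ℕ) (U : ι → Set (EuclideanSpace ℝ (Fin d))),
    IsRealization C U ∧ IsTopDimRealization U ∧ ∀ i, Convex ℝ (U i)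

/-- The restriction `C|_χ = {c ∩ χ : c ∈ C}`, as a code on the neuron set `χ`. -/
def restrictCode {ι : Type*} [DecidableEq ι] (C : Set (Finset ι)) (χ : Finset ι) :
    Set (Finset {i : ι // i ∈ χ}) :=
  (fun c => c.subtype (· ∈ χ)) '' C

/-- Neuron `j` is trivial in `C`: no codeword contains it. -/
def TrivialNeuron {ι : Type*} (C : Set (Finset ι)) (j : ι) : Prop :=
  ∀ c ∈ C, j ∉ c

/-- Neuron `j` is redundant in `C`. -/
def RedundantNeuron {ι : Type*} [DecidableEq ι] (C : Set (Finset ι)) (j : ι) : Prop :=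
  ¬TrivialNeuron C j ∧ ∃ σ : Finset ι, j ∉ σ ∧ trunk C {j} = trunk C σ

/-- `C` is decomposable with embedded part supported on `φ`. -/
def IsDecomposable {ι : Type*} [DecidableEq ι] [Fintype ι] (C : Set (Finset ι))
    (φ : Finset ι) : Prop :=
  φ ≠ ∅ ∧ φ ≠ Finset.univ ∧
    ∃ ψ : Finset ι, Disjoint φ ψ ∧ ψ ≠ Finset.univ ∧ ψ ∈ C ∧
      ∀ c ∈ C, (c ∩ φ).Nonempty → ∃ φ' ⊆ φ, c = φ' ∪ ψ

end NeuralCode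

open NeuralCode

section Helpers
variable {ι : Type*} {d m : ℕ}

lemma mem_codeAtom_iff (U : ι → Set (EuclideanSpace ℝ (Fin d))) (c : Finset ι)
    (x : EuclideanSpace ℝ (Fin d)) :
    x ∈ codeAtom U c ↔ ∀ i, i ∈ c ↔ x ∈ U i := by
  simp only [codeAtom, USet, Set.mem_diff, Set.mem_iInter, Set.mem_iUnion, not_exists]
  constructor
  · rintro ⟨h1, h2⟩ i
    exact ⟨h1 i, fun hx => by by_contra hi; exact h2 i hi hx⟩
  · intro h; exact ⟨fun i hi => (h i).1 hi, fun i hi hx => hi ((h i).2 hx)⟩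

lemma codeAtom_unique {U : ι → Set (EuclideanSpace ℝ (Fin d))} {c c' : Finset ι}
    {x : EuclideanSpace ℝ (Fin d)} (h : x ∈ codeAtom U c) (h' : x ∈ codeAtom U c') :
    c = c' := by
  rw [mem_codeAtom_iff] at h h'
  exact Finset.ext fun i => (h i).trans (h' i).symm

lemma exists_codeAtom [Fintype ι] (U : ι → Set (EuclideanSpace ℝ (Fin d)))
    (x : EuclideanSpace ℝ (Fin d)) : ∃ c, x ∈ codeAtom U c := by
  classical
  exact ⟨Finset.univ.filter (fun i => x ∈ U i), (mem_codeAtom_iff _ _ _).2 fun i => by simp⟩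

lemma codeAtom_preimage (g : EuclideanSpace ℝ (Fin m) → EuclideanSpace ℝ (Fin d))
    (V : ι → Set (EuclideanSpace ℝ (Fin d))) (c : Finset ι) :
    codeAtom (fun i => g ⁻¹' V i) c = g ⁻¹' codeAtom V c := by
  ext x
  rw [Set.mem_preimage, mem_codeAtom_iff, mem_codeAtom_iff]
  rfl

noncomputable def projCLM {e m : ℕ} (h : e ≤ m) :
    EuclideanSpace ℝ (Fin m) →L[ℝ] EuclideanSpace ℝ (Fin e) :=
  ((EuclideanSpace.equiv (Fin e) ℝ).symm.toContinuousLinearMap).comp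
    ((LinearMap.toContinuousLinearMap (LinearMap.funLeft ℝ ℝ (Fin.castLE h))).comp
      (EuclideanSpace.equiv (Fin m) ℝ).toContinuousLinearMap)

lemma projCLM_surjective {e m : ℕ} (h : e ≤ m) : Function.Surjective (projCLM h) := by
  simp only [projCLM, ContinuousLinearMap.coe_comp']
  refine Function.Surjective.comp ((EuclideanSpace.equiv (Fin e) ℝ).symm.surjective) ?_
  refine Function.Surjective.comp ?_ ((EuclideanSpace.equiv (Fin m) ℝ).surjective)
  have := LinearMap.funLeft_surjective_of_injective ℝ ℝ _ (Fin.castLE_injective h)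
  simpa [LinearMap.coe_toContinuousLinearMap'] using this

lemma projCLM_preimage_convex {e m : ℕ} (h : e ≤ m) {s : Set (EuclideanSpace ℝ (Fin e))}
    (hs : Convex ℝ s) : Convex ℝ (projCLM h ⁻¹' s) := by
  have := hs.linear_preimage (projCLM h : EuclideanSpace ℝ (Fin m) →ₗ[ℝ] _)
  simpa using this

end Helpers

/-- a decomposable code with convex embedded code and top-dimensionally
convex ambient code is convex. -/
theorem decomposable_convex {n : ℕ} (C : Set (Finset (Fin n))) (φ : Finset (Fin n))
    (hdec : IsDecomposable C φ)
    (hemb : IsConvexCode (restrictCode C φ))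
    (hamb : IsTopDimConvexCode (restrictCode C φᶜ)) :
    IsConvexCode C := by
  classical
  obtain ⟨hφne, hφuniv, ψ, hdisj, hψuniv, hψC, hstruct⟩ := hdec
  obtain ⟨e, V, hV, hVconv⟩ := hemb
  obtain ⟨d, W, hW, hWtop, hWconv⟩ := hamb
  -- ψ is disjoint from φ
  have hψφ : ∀ i ∈ ψ, i ∉ φ := fun i hi hiφ => (Finset.disjoint_left.1 hdisj) hiφ hi
  set m := max e d + 1 with hm
  have he : e ≤ m := le_trans (le_max_left _ _) (Nat.le_succ _)
  have hd : d ≤ m := le_trans (le_max_right _ _) (Nat.le_succ _)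
  -- lifted realizations
  set Vt : {i // i ∈ φ} → Set (EuclideanSpace ℝ (Fin m)) :=
    fun i => projCLM he ⁻¹' V i with hVt
  set Wt : {i // i ∈ φᶜ} → Set (EuclideanSpace ℝ (Fin m)) :=
    fun i => projCLM hd ⁻¹' W i with hWt
  have hVtAtom : ∀ c', (codeAtom Vt c').Nonempty ↔ c' ∈ restrictCode C φ := by
    intro c'
    rw [hVt, codeAtom_preimage]
    constructor
    · rintro ⟨x, hx⟩
      exact (hV.2 c').2 ⟨projCLM he x, hx⟩
    · intro hc'
      obtain ⟨y, hy⟩ := (hV.2 c').1 hc'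
      obtain ⟨x, hx⟩ := projCLM_surjective he y
      exact ⟨x, by rw [Set.mem_preimage, hx]; exact hy⟩
  have hWtAtom : ∀ c', (codeAtom Wt c').Nonempty ↔ c' ∈ restrictCode C φᶜ := by
    intro c'
    rw [hWt, codeAtom_preimage]
    constructor
    · rintro ⟨x, hx⟩
      exact (hW.2 c').2 ⟨projCLM hd x, hx⟩
    · intro hc'
      obtain ⟨y, hy⟩ := (hW.2 c').1 hc'
      obtain ⟨x, hx⟩ := projCLM_surjective hd y
      exact ⟨x, by rw [Set.mem_preimage, hx]; exact hy⟩
  -- the ψ-atom of the ambient realization contains a ball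
  set ψ' : Finset {i // i ∈ φᶜ} := ψ.subtype (· ∈ φᶜ) with hψ'
  have hψ'mem : ψ' ∈ restrictCode C φᶜ := ⟨ψ, hψC, rfl⟩
  have hψatomne : (codeAtom W ψ').Nonempty := (hW.2 ψ').1 hψ'mem
  have hψatomTD : TopDimensional (codeAtom W ψ') := by
    rcases hWtop ψ' with h | h
    · exact absurd hψatomne (by rw [h]; exact Set.not_nonempty_empty)
    · exact h
  obtain ⟨q, hq⟩ : (interior (codeAtom W ψ')).Nonempty := by
    have := hψatomTD Set.univ isOpen_univ (by rwa [Set.inter_univ])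
    rwa [Set.inter_univ] at this
  obtain ⟨p, hp⟩ := projCLM_surjective hd q
  have hpmem : p ∈ projCLM hd ⁻¹' interior (codeAtom W ψ') := by
    rw [Set.mem_preimage, hp]; exact hq
  obtain ⟨ε, hε, hball⟩ := Metric.isOpen_iff.1
    (isOpen_interior.preimage (projCLM hd).continuous) p hpmem
  set r : ℝ := ε / 4 with hr
  have hr0 : 0 < r := by positivity
  have hball3 : Metric.ball p (3 * r) ⊆ codeAtom Wt ψ' := by
    intro x hx
    have : x ∈ Metric.ball p ε := by
      rw [Metric.mem_ball] at hx ⊢; rw [hr] at hx; linarith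
    have := hball this
    rw [hWt, codeAtom_preimage]
    have h2 : projCLM hd x ∈ interior (codeAtom W ψ') := this
    exact Set.mem_preimage.2 (interior_subset h2)
  -- chosen points in atoms of the embedded realization
  set pt : Finset {i // i ∈ φ} → EuclideanSpace ℝ (Fin m) :=
    fun c' => if h : (codeAtom Vt c').Nonempty then h.choose else 0 with hpt
  have hptmem : ∀ c', (codeAtom Vt c').Nonempty → pt c' ∈ codeAtom Vt c' := by
    intro c' h
    rw [hpt]; simp only [dif_pos h]; exact h.choose_spec
  set R : ℝ := 1 + Finset.univ.sup' Finset.univ_nonempty (fun c' => ‖pt c'‖) with hR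
  have hptR : ∀ c', ‖pt c'‖ < R := by
    intro c'
    have := Finset.le_sup' (fun c' => ‖pt c'‖) (Finset.mem_univ c')
    rw [hR]; linarith
  have hR0 : 0 < R := lt_of_le_of_lt (norm_nonneg (pt ∅)) (hptR ∅)
  -- the affine contraction
  set S : EuclideanSpace ℝ (Fin m) → EuclideanSpace ℝ (Fin m) :=
    fun x => (R / r) • (x - p) with hS
  have hScont : Continuous S := by
    rw [hS]; fun_prop
  have hSball : ∀ x, S x ∈ Metric.ball 0 R ↔ x ∈ Metric.ball p r := by
    intro x
    rw [mem_ball_zero_iff, Metric.mem_ball, dist_eq_norm, hS]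
    have hRr : 0 < R / r := by positivity
    rw [norm_smul, Real.norm_eq_abs, abs_of_pos hRr]
    constructor
    · intro h
      by_contra h'
      push_neg at h'
      have : R / r * r ≤ R / r * ‖x - p‖ := by
        exact mul_le_mul_of_nonneg_left h' (le_of_lt hRr)
      rw [div_mul_cancel₀ R (ne_of_gt hr0)] at this
      linarith
    · intro h
      have : R / r * ‖x - p‖ < R / r * r := by
        exact mul_lt_mul_of_pos_left h hRr
      rwa [div_mul_cancel₀ R (ne_of_gt hr0)] at this
  have hSinv : ∀ y, S (p + (r / R) • y) = y := by
    intro y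
    rw [hS]
    show (R / r) • (p + (r / R) • y - p) = y
    rw [add_sub_cancel_left, smul_smul,
      show R / r * (r / R) = 1 by field_simp, one_smul]
  have hSconvpre : ∀ A : Set (EuclideanSpace ℝ (Fin m)), Convex ℝ A →
      Convex ℝ (S ⁻¹' A) := by
    intro A hA x hx y hy a b ha hb hab
    rw [Set.mem_preimage] at hx hy ⊢
    have key : S (a • x + b • y) = a • S x + b • S y := by
      show (R / r) • (a • x + b • y - p) =
        a • ((R / r) • (x - p)) + b • ((R / r) • (y - p))
      have h2 : a • (x - p) + b • (y - p) = a • x + b • y - p := by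
        have h3 : (a + b) • p = p := by rw [hab, one_smul]
        calc a • (x - p) + b • (y - p) = a • x + b • y - (a + b) • p := by
              rw [smul_sub, smul_sub, add_smul]; abel
          _ = a • x + b • y - p := by rw [h3]
      rw [← h2, smul_add, smul_comm (R/r) a, smul_comm (R/r) b]
    rw [key]
    exact hA hx hy ha hb hab
  -- the final realization
  set U : Fin n → Set (EuclideanSpace ℝ (Fin m)) := fun i =>
    if h : i ∈ φ then S ⁻¹' (Vt ⟨i, h⟩ ∩ Metric.ball 0 R)
    else Wt ⟨i, Finset.mem_compl.2 h⟩ with hU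
  have hUφ : ∀ i (h : i ∈ φ) x, (x ∈ U i ↔ (S x ∈ Vt ⟨i, h⟩ ∧ x ∈ Metric.ball p r)) := by
    intro i h x
    rw [hU]
    simp only [dif_pos h, Set.mem_preimage, Set.mem_inter_iff, hSball]
  have hUφc : ∀ i (h : i ∉ φ) x,
      (x ∈ U i ↔ x ∈ Wt ⟨i, Finset.mem_compl.2 h⟩) := by
    intro i h x
    rw [hU]
    simp only [dif_neg h]
  -- ambient pattern inside the big ball
  have hamb_pattern : ∀ x ∈ Metric.ball p (3 * r), ∀ i (h : i ∉ φ),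
      (x ∈ U i ↔ i ∈ ψ) := by
    intro x hx i h
    rw [hUφc i h]
    have hx' := (mem_codeAtom_iff Wt ψ' x).1 (hball3 hx)
    rw [← hx' ⟨i, Finset.mem_compl.2 h⟩, hψ', Finset.mem_subtype]
  have hball_sub : Metric.ball p r ⊆ Metric.ball p (3 * r) :=
    Metric.ball_subset_ball (by linarith)
  -- embedded sets vanish outside the small ball
  have hout : ∀ x, x ∉ Metric.ball p r → ∀ i (h : i ∈ φ), x ∉ U i := by
    intro x hx i h hmem
    exact hx ((hUφ i h x).1 hmem).2
  refine ⟨m, U, ⟨?_, ?_⟩, ?_⟩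
  · -- openness
    intro i
    rw [hU]
    by_cases h : i ∈ φ
    · simp only [dif_pos h]
      exact (((hV.1 _).preimage (projCLM he).continuous).inter Metric.isOpen_ball).preimage
        hScont
    · simp only [dif_neg h]
      exact (hW.1 _).preimage (projCLM hd).continuous
  · -- codewords
    intro c
    constructor
    · -- forward: c ∈ C implies nonempty atom
      intro hc
      by_cases hcφ : (c ∩ φ).Nonempty
      · -- c = φ' ∪ ψ
        obtain ⟨φ'', hφ''sub, hcψ⟩ := hstruct c hc hcφ
        set c' : Finset {i // i ∈ φ} := c.subtype (· ∈ φ) with hc'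
        have hc'mem : c' ∈ restrictCode C φ := ⟨c, hc, rfl⟩
        have hc'ne : (codeAtom Vt c').Nonempty := (hVtAtom c').2 hc'mem
        have hy := hptmem c' hc'ne
        set x : EuclideanSpace ℝ (Fin m) := p + (r / R) • pt c' with hx
        have hxball : x ∈ Metric.ball p r := by
          rw [Metric.mem_ball, dist_eq_norm, hx, add_sub_cancel_left, norm_smul,
            Real.norm_eq_abs, abs_of_pos (by positivity : (0:ℝ) < r / R)]
          calc r / R * ‖pt c'‖ < r / R * R :=
                mul_lt_mul_of_pos_left (hptR c') (by positivity)
            _ = r := div_mul_cancel₀ r (ne_of_gt hR0)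
        refine ⟨x, (mem_codeAtom_iff U c x).2 fun i => ?_⟩
        by_cases h : i ∈ φ
        · rw [hUφ i h x, hx, hSinv]
          constructor
          · intro hic
            exact ⟨(mem_codeAtom_iff Vt c' _).1 hy ⟨i, h⟩ |>.1
              (Finset.mem_subtype.2 hic), hxball⟩
          · rintro ⟨hv, -⟩
            have := ((mem_codeAtom_iff Vt c' _).1 hy ⟨i, h⟩).2 hv
            exact Finset.mem_subtype.1 this
        · rw [hamb_pattern x (hball_sub hxball) i h, hcψ, Finset.mem_union]
          constructor
          · rintro (h1 | h1)
            · exact absurd (hφ''sub h1) h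
            · exact h1
          · exact fun h1 => Or.inr h1
      · -- c ∩ φ = ∅
        by_cases hcpsi : c = ψ
        · -- use a point in the annulus
          subst hcpsi
          set v : EuclideanSpace ℝ (Fin m) :=
            EuclideanSpace.single (⟨0, by omega⟩ : Fin m) (2 * r) with hv
          have hvnorm : ‖v‖ = 2 * r := by
            rw [hv, EuclideanSpace.norm_single, Real.norm_eq_abs, abs_of_pos (by linarith)]
          set x := p + v with hx
          have hxd : ‖x - p‖ = 2 * r := by rw [hx, add_sub_cancel_left, hvnorm]
          have hxnotball : x ∉ Metric.ball p r := by
            rw [Metric.mem_ball, dist_eq_norm, hxd]; linarith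
          have hxball3 : x ∈ Metric.ball p (3 * r) := by
            rw [Metric.mem_ball, dist_eq_norm, hxd]; linarith
          refine ⟨x, (mem_codeAtom_iff U c x).2 fun i => ?_⟩
          by_cases h : i ∈ φ
          · constructor
            · intro hic
              exact absurd hic (fun hic => hψφ i hic h)
            · intro hmem
              exact absurd hmem (hout x hxnotball i h)
          · rw [hamb_pattern x hxball3 i h]
        · -- c ≠ ψ : use a point of the ambient atom
          set c' : Finset {i // i ∈ φᶜ} := c.subtype (· ∈ φᶜ) with hc'
          have hc'mem : c' ∈ restrictCode C φᶜ := ⟨c, hc, rfl⟩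
          obtain ⟨x, hxatom⟩ := (hWtAtom c').2 hc'mem
          have hxnotball : x ∉ Metric.ball p r := by
            intro hx
            have : x ∈ codeAtom Wt ψ' := hball3 (hball_sub hx)
            have hceq : c' = ψ' := codeAtom_unique hxatom this
            apply hcpsi
            ext i
            by_cases h : i ∈ φ
            · constructor
              · intro hic
                exact absurd (Finset.mem_inter.2 ⟨hic, h⟩)
                  (by rw [Finset.not_nonempty_iff_eq_empty] at hcφ; simp [hcφ])
              · intro hiψ
                exact absurd h (hψφ i hiψ)
            · have h1 : (⟨i, Finset.mem_compl.2 h⟩ : {j // j ∈ φᶜ}) ∈ c' ↔ i ∈ c :=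
                Finset.mem_subtype
              have h2 : (⟨i, Finset.mem_compl.2 h⟩ : {j // j ∈ φᶜ}) ∈ ψ' ↔ i ∈ ψ :=
                Finset.mem_subtype
              rw [← h1, ← h2, hceq]
          refine ⟨x, (mem_codeAtom_iff U c x).2 fun i => ?_⟩
          by_cases h : i ∈ φ
          · constructor
            · intro hic
              exact absurd (Finset.mem_inter.2 ⟨hic, h⟩)
                (by rw [Finset.not_nonempty_iff_eq_empty] at hcφ; simp [hcφ])
            · intro hmem
              exact absurd hmem (hout x hxnotball i h)
          · rw [hUφc i h]
            have := (mem_codeAtom_iff Wt c' x).1 hxatom ⟨i, Finset.mem_compl.2 h⟩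
            rw [← this, hc', Finset.mem_subtype]
    · -- backward: nonempty atom implies c ∈ C
      rintro ⟨x, hxatom⟩
      have hpat := (mem_codeAtom_iff U c x).1 hxatom
      by_cases hxb : x ∈ Metric.ball p r
      · -- inside the small ball
        obtain ⟨c'', hc''⟩ := exists_codeAtom Vt (S x)
        have hc''mem : c'' ∈ restrictCode C φ := (hVtAtom c'').1 ⟨S x, hc''⟩
        obtain ⟨a, haC, hasub⟩ := hc''mem
        have hkeyφ : ∀ i (h : i ∈ φ), (i ∈ c ↔ i ∈ a) := by
          intro i h
          rw [hpat i, hUφ i h x]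
          have h1 : S x ∈ Vt ⟨i, h⟩ ↔ (⟨i, h⟩ : {j // j ∈ φ}) ∈ c'' := by
            have := (mem_codeAtom_iff Vt c'' (S x)).1 hc'' ⟨i, h⟩
            exact this.symm
          have h2 : (⟨i, h⟩ : {j // j ∈ φ}) ∈ c'' ↔ i ∈ a := by
            rw [← hasub, Finset.mem_subtype]
          constructor
          · rintro ⟨hv, -⟩; exact h2.1 (h1.1 hv)
          · intro hia; exact ⟨h1.2 (h2.2 hia), hxb⟩
        have hkeyφc : ∀ i, i ∉ φ → (i ∈ c ↔ i ∈ ψ) := by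
          intro i h
          rw [hpat i, hamb_pattern x (hball_sub hxb) i h]
        by_cases hcφ : (c ∩ φ).Nonempty
        · obtain ⟨i0, hi0⟩ := hcφ
          rw [Finset.mem_inter] at hi0
          have haφ : (a ∩ φ).Nonempty :=
            ⟨i0, Finset.mem_inter.2 ⟨(hkeyφ i0 hi0.2).1 hi0.1, hi0.2⟩⟩
          obtain ⟨φ'', hφ''sub, haψ⟩ := hstruct a haC haφ
          have : c = a := by
            ext i
            by_cases h : i ∈ φ
            · exact hkeyφ i h
            · rw [hkeyφc i h, haψ, Finset.mem_union]
              constructor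
              · exact fun h1 => Or.inr h1
              · rintro (h1 | h1)
                · exact absurd (hφ''sub h1) h
                · exact h1
          rw [this]; exact haC
        · have : c = ψ := by
            ext i
            by_cases h : i ∈ φ
            · constructor
              · intro hic; exact absurd ⟨i, Finset.mem_inter.2 ⟨hic, h⟩⟩ hcφ
              · intro hiψ; exact absurd h (hψφ i hiψ)
            · exact hkeyφc i h
          rw [this]; exact hψC
      · -- outside the small ball
        have hcφ : ∀ i ∈ φ, i ∉ c := by
          intro i h hic
          exact hout x hxb i h ((hpat i).1 hic)
        set c' : Finset {i // i ∈ φᶜ} := c.subtype (· ∈ φᶜ) with hc'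
        have hxatom' : x ∈ codeAtom Wt c' := by
          rw [mem_codeAtom_iff]
          rintro ⟨i, hi⟩
          have h : i ∉ φ := Finset.mem_compl.1 hi
          have := (hpat i).trans (hUφc i h x)
          rw [hc', Finset.mem_subtype]
          rw [← this]
        have hc'mem : c' ∈ restrictCode C φᶜ := (hWtAtom c').1 ⟨x, hxatom'⟩
        obtain ⟨a, haC, hasub⟩ := hc'mem
        have hkey : ∀ i, i ∉ φ → (i ∈ c ↔ i ∈ a) := by
          intro i h
          have h1 : (⟨i, Finset.mem_compl.2 h⟩ : {j // j ∈ φᶜ}) ∈ c' ↔ i ∈ c :=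
            Finset.mem_subtype
          have h2 : (⟨i, Finset.mem_compl.2 h⟩ : {j // j ∈ φᶜ}) ∈ c' ↔ i ∈ a := by
            rw [← hasub, Finset.mem_subtype]
          rw [← h1, h2]
        by_cases haφ : (a ∩ φ).Nonempty
        · obtain ⟨φ'', hφ''sub, haψ⟩ := hstruct a haC haφ
          have : c = ψ := by
            ext i
            by_cases h : i ∈ φ
            · constructor
              · intro hic; exact absurd hic (hcφ i h)
              · intro hiψ; exact absurd h (hψφ i hiψ)
            · rw [hkey i h, haψ, Finset.mem_union]
              constructor
              · rintro (h1 | h1)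
                · exact absurd (hφ''sub h1) h
                · exact h1
              · exact fun h1 => Or.inr h1
          rw [this]; exact hψC
        · have : c = a := by
            ext i
            by_cases h : i ∈ φ
            · constructor
              · intro hic; exact absurd hic (hcφ i h)
              · intro hia
                exact absurd ⟨i, Finset.mem_inter.2 ⟨hia, h⟩⟩ haφ
            · exact hkey i h
          rw [this]; exact haC
  · -- convexity
    intro i
    rw [hU]
    by_cases h : i ∈ φ
    · simp only [dif_pos h]
      exact hSconvpre _ ((projCLM_preimage_convex he (hVconv _)).inter (convex_ball 0 R))
    · simp only [dif_neg h]
      exact projCLM_preimage_convex hd (hWconv _)
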